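/- Let Z be a global cross section with common isotropy subgroup G₀ and let Z' ⊆ X be any global cross section. Then Z' can be written in the form Z' = {g n_z z : z ∈ Z} for some g ∈ G and elements n_z ∈ N (the normalizer of G₀ in G), one for each z ∈ Z. -/

import Mathlib

/-- Any global cross section `Z'` can be written as `{g n_z z : z ∈ Z}` where `Z` is a
given global cross section with common isotropy subgroup `G₀`, `g ∈ G`, and the
elements `n_z` lie in the normalizer `N` of `G₀`. -/
theorem stmt7 {G X : Type*} [Group G] [MulAction G X] (Z Z' : Set X) (G₀ : Subgroup G)
    (hcs : ∀ x : X, ∃! z, z ∈ Z ∧ z ∈ MulAction.orbit G x)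
    (hglob : ∀ z ∈ Z, MulAction.stabilizer G z = G₀)
    (hcs' : ∀ x : X, ∃! z', z' ∈ Z' ∧ z' ∈ MulAction.orbit G x)
    (hglob' : ∀ z₁ ∈ Z', ∀ z₂ ∈ Z',
      MulAction.stabilizer G z₁ = MulAction.stabilizer G z₂) :
    ∃ (g : G) (n : X → G), (∀ z ∈ Z, n z ∈ Subgroup.normalizer (G₀ : Set G)) ∧
      Z' = (fun z => (g * n z) • z) '' Z := by
  classical
  by_cases hX : Nonempty X
  · obtain ⟨x₀⟩ := hX
    obtain ⟨z₀, ⟨hz₀Z, _⟩, _⟩ := hcs x₀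
    -- for each z ∈ Z choose h z with h z • z ∈ Z'
    have hex : ∀ z : X, z ∈ Z → ∃ k : G, k • z ∈ Z' := by
      intro z _
      obtain ⟨z', ⟨hz'Z', k, hk⟩, _⟩ := hcs' z
      exact ⟨k, Set.mem_of_eq_of_mem hk hz'Z'⟩
    set h : X → G := fun z => if hz : z ∈ Z then Classical.choose (hex z hz) else 1 with hhdef
    have hh : ∀ z (hz : z ∈ Z), h z • z ∈ Z' := by
      intro z hz
      simp only [hhdef, dif_pos hz]
      exact Classical.choose_spec (hex z hz)
    -- key: conjugation property
    have hkey : ∀ z ∈ Z, ∀ k : G, (h z)⁻¹ * k * h z ∈ G₀ ↔ (h z₀)⁻¹ * k * h z₀ ∈ G₀ := by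
      intro z hz k
      have hst : MulAction.stabilizer G (h z • z) = MulAction.stabilizer G (h z₀ • z₀) :=
        hglob' _ (hh z hz) _ (hh z₀ hz₀Z)
      have h1 : ∀ (z : X), z ∈ Z → ∀ k : G,
          k ∈ MulAction.stabilizer G (h z • z) ↔ (h z)⁻¹ * k * h z ∈ G₀ := by
        intro z hz k
        rw [← hglob z hz]
        constructor
        · intro hk
          rw [MulAction.mem_stabilizer_iff] at hk ⊢
          rw [mul_smul, mul_smul, hk, inv_smul_smul]
        · intro hk
          rw [MulAction.mem_stabilizer_iff] at hk ⊢
          have := congrArg (fun x => h z • x) hk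
          simpa [mul_smul] using this
      rw [← h1 z hz k, ← h1 z₀ hz₀Z k, hst]
    refine ⟨h z₀, fun z => (h z₀)⁻¹ * h z, ?_, ?_⟩
    · intro z hz
      rw [Subgroup.mem_normalizer_iff]
      intro k
      have hiff := hkey z hz (h z * k * (h z)⁻¹)
      have e1 : (h z)⁻¹ * (h z * k * (h z)⁻¹) * h z = k := by group
      have e2 : (h z₀)⁻¹ * (h z * k * (h z)⁻¹) * h z₀ =
          ((h z₀)⁻¹ * h z) * k * ((h z₀)⁻¹ * h z)⁻¹ := by group
      rw [e1, e2] at hiff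
      exact hiff
    · ext z'
      constructor
      · intro hz'
        obtain ⟨z, ⟨hzZ, hzorb⟩, _⟩ := hcs z'
        refine ⟨z, hzZ, ?_⟩
        have horb : h z • z ∈ MulAction.orbit G z' := by
          obtain ⟨k, hk⟩ := hzorb
          have hk' : k • z' = z := hk
          exact ⟨h z * k, show (h z * k) • z' = h z • z by rw [mul_smul, hk']⟩
        obtain ⟨w, hw, huniq⟩ := hcs' z'
        have e1 : h z • z = w := huniq _ ⟨hh z hzZ, horb⟩
        have e2 : z' = w := huniq _ ⟨hz', MulAction.mem_orbit_self z'⟩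
        show (h z₀ * ((h z₀)⁻¹ * h z)) • z = z'
        rw [mul_inv_cancel_left, e1, ← e2]
      · rintro ⟨z, hzZ, rfl⟩
        show (h z₀ * ((h z₀)⁻¹ * h z)) • z ∈ Z'
        rw [mul_inv_cancel_left]
        exact hh z hzZ
  · refine ⟨1, fun _ => 1, fun z _ => (Subgroup.normalizer (G₀ : Set G)).one_mem, ?_⟩
    ext x
    exact absurd ⟨x⟩ hX
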